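/- Let V1 = (a1,b1,c1,d1) and V2 = (a2,b2,c2,d2) be elements of se(2) × R, with bracket [V1,V2] = (0, c1·a2 − a1·c2, a1·b2 − b1·a2, 0). Then the Lie algebra generated by {V1, V2} equals the whole 4-dimensional algebra se(2) × R if and only if a2·d1 − d2·a1 ≠ 0 and (c1·a2 − a1·c2 ≠ 0 or a1·b2 − b1·a2 ≠ 0). -/

import Mathlib

/-- The Lie bracket on se(2) × ℝ in coordinates (a,b,c,d):
[V1,V2] = (0, c1·a2 − a1·c2, a1·b2 − b1·a2, 0). -/
def bracket4 (u v : Fin 4 → ℝ) : Fin 4 → ℝ :=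
  ![0, u 2 * v 0 - u 0 * v 2, u 0 * v 1 - u 1 * v 0, 0]

set_option maxHeartbeats 1600000 in
/-- Controllability conditions for 2-input systems on SE(2) × ℝ: the Lie algebra generated
by {V1, V2} is all of se(2) × ℝ iff `a2·d1 − d2·a1 ≠ 0` and
(`c1·a2 − a1·c2 ≠ 0` or `a1·b2 − b1·a2 ≠ 0`). -/
theorem se2R_two_input_controllability (a1 b1 c1 d1 a2 b2 c2 d2 : ℝ) :
    let V1 : Fin 4 → ℝ := ![a1, b1, c1, d1]
    let V2 : Fin 4 → ℝ := ![a2, b2, c2, d2]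
    ((∀ S : Submodule ℝ (Fin 4 → ℝ), V1 ∈ S → V2 ∈ S →
        (∀ u v, u ∈ S → v ∈ S → bracket4 u v ∈ S) → S = ⊤) ↔
      (a2 * d1 - d2 * a1 ≠ 0 ∧ (c1 * a2 - a1 * c2 ≠ 0 ∨ a1 * b2 - b1 * a2 ≠ 0))) := by
  intro V1 V2
  constructor
  · -- forward direction, by contraposition
    intro h
    by_contra hc
    push_neg at hc
    by_cases hD : a2 * d1 - d2 * a1 = 0
    · -- hyperplane {v | α v0 + β v3 = 0}
      obtain ⟨α, β, hne, h1, h2⟩ :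
          ∃ α β : ℝ, (α ≠ 0 ∨ β ≠ 0) ∧ α * a1 + β * d1 = 0 ∧ α * a2 + β * d2 = 0 := by
        by_cases h1 : a1 = 0 ∧ d1 = 0
        · by_cases h2 : a2 = 0 ∧ d2 = 0
          · exact ⟨1, 0, Or.inl one_ne_zero, by simp [h1.1, h1.2], by simp [h2.1, h2.2]⟩
          · refine ⟨d2, -a2, ?_, by simp [h1.1, h1.2], by ring⟩
            rcases not_and_or.mp h2 with h | h
            · exact Or.inr (neg_ne_zero.mpr h)
            · exact Or.inl h
        · refine ⟨d1, -a1, ?_, by ring, by linarith [hD]⟩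
          rcases not_and_or.mp h1 with h | h
          · exact Or.inr (neg_ne_zero.mpr h)
          · exact Or.inl h
      set φ : (Fin 4 → ℝ) →ₗ[ℝ] ℝ := α • LinearMap.proj 0 + β • LinearMap.proj 3 with hφ
      have hmem : ∀ v : Fin 4 → ℝ, v ∈ LinearMap.ker φ ↔ α * v 0 + β * v 3 = 0 := by
        intro v; simp [hφ, LinearMap.mem_ker, smul_eq_mul]
      have htop : LinearMap.ker φ = ⊤ := by
        refine h _ ?_ ?_ ?_
        · rw [hmem]; simpa [V1] using h1
        · rw [hmem]; simpa [V2] using h2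
        · intro u v _ _; rw [hmem]; simp [bracket4]
      have : (![α, 0, 0, β] : Fin 4 → ℝ) ∈ LinearMap.ker φ := htop ▸ Submodule.mem_top
      rw [hmem] at this
      simp only [Matrix.cons_val_zero] at this
      have h3 : (![α, 0, 0, β] : Fin 4 → ℝ) 3 = β := by simp
      rw [h3] at this
      rcases hne with h | h
      · nlinarith [mul_self_nonneg β, mul_self_pos.mpr h]
      · nlinarith [mul_self_nonneg α, mul_self_pos.mpr h]
    · -- D ≠ 0, so P = Q = 0
      obtain ⟨hP, hQ⟩ := hc hD
      set S := Submodule.span ℝ ({V1, V2} : Set (Fin 4 → ℝ)) with hS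
      have htop : S = ⊤ := by
        refine h S (Submodule.subset_span (by simp)) (Submodule.subset_span (by simp)) ?_
        intro u v hu hv
        obtain ⟨x, y, hxy⟩ := Submodule.mem_span_pair.mp hu
        obtain ⟨z, w, hzw⟩ := Submodule.mem_span_pair.mp hv
        have : bracket4 u v = 0 := by
          funext i
          subst hxy hzw
          fin_cases i <;>
            simp [bracket4, V1, V2, smul_eq_mul] <;>
            first
            | linear_combination (x * w - y * z) * hP
            | linear_combination (x * w - y * z) * hQ
        rw [this]; exact S.zero_mem
      have he1 : (![0, 1, 0, 0] : Fin 4 → ℝ) ∈ S := htop ▸ Submodule.mem_top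
      obtain ⟨x, y, hxy⟩ := Submodule.mem_span_pair.mp he1
      have e0 := congrFun hxy 0
      have e1 := congrFun hxy 1
      have e3 := congrFun hxy 3
      simp [V1, V2, smul_eq_mul] at e0 e1 e3
      -- x*a1 + y*a2 = 0, x*b1+y*b2 = 1, x*d1+y*d2 = 0
      have hx : x = 0 := by
        have : x * (a2 * d1 - d2 * a1) = a2 * (x * d1 + y * d2) - d2 * (x * a1 + y * a2) := by
          ring
        rw [e0, e3] at this
        simp at this
        rcases this with h | h
        · exact h
        · exact absurd h hD
      have hy : y = 0 := by
        have : y * (a2 * d1 - d2 * a1) = d1 * (x * a1 + y * a2) - a1 * (x * d1 + y * d2) := by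
          ring
        rw [e0, e3] at this
        simp at this
        rcases this with h | h
        · exact h
        · exact absurd h hD
      rw [hx, hy] at e1
      norm_num at e1
  · -- backward direction
    rintro ⟨hD, hPQ⟩ S hV1 hV2 hbr
    set P := c1 * a2 - a1 * c2 with hPdef
    set Q := a1 * b2 - b1 * a2 with hQdef
    have hPQ2 : P ^ 2 + Q ^ 2 ≠ 0 := by
      rcases hPQ with h | h
      · positivity
      · positivity
    have hW : (![0, P, Q, 0] : Fin 4 → ℝ) ∈ S := by
      have := hbr V1 V2 hV1 hV2
      have heq : bracket4 V1 V2 = ![0, P, Q, 0] := by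
        funext i; fin_cases i <;> simp [bracket4, V1, V2, P, Q]
      rwa [heq] at this
    obtain ⟨a, ha, hW1⟩ : ∃ a : ℝ, a ≠ 0 ∧ (![0, -(a*Q), a*P, 0] : Fin 4 → ℝ) ∈ S := by
      by_cases ha1 : a1 = 0
      · have ha2 : a2 ≠ 0 := by
          intro ha2; apply hD; rw [ha1, ha2]; ring
        refine ⟨a2, ha2, ?_⟩
        have := hbr V2 _ hV2 hW
        have heq : bracket4 V2 ![0, P, Q, 0] = ![0, -(a2*Q), a2*P, 0] := by
          funext i; fin_cases i <;> simp [bracket4, V2]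
        rwa [heq] at this
      · refine ⟨a1, ha1, ?_⟩
        have := hbr V1 _ hV1 hW
        have heq : bracket4 V1 ![0, P, Q, 0] = ![0, -(a1*Q), a1*P, 0] := by
          funext i; fin_cases i <;> simp [bracket4, V1]
        rwa [heq] at this
    have he1 : (![0, 1, 0, 0] : Fin 4 → ℝ) ∈ S := by
      have heq : (![0, 1, 0, 0] : Fin 4 → ℝ) =
          (P / (P^2 + Q^2)) • ![0, P, Q, 0] + (-Q / (a * (P^2 + Q^2))) • ![0, -(a*Q), a*P, 0] := by
        funext i; fin_cases i <;> simp [smul_eq_mul] <;> field_simp <;> ring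
      rw [heq]
      exact S.add_mem (S.smul_mem _ hW) (S.smul_mem _ hW1)
    have he2 : (![0, 0, 1, 0] : Fin 4 → ℝ) ∈ S := by
      have heq : (![0, 0, 1, 0] : Fin 4 → ℝ) =
          (Q / (P^2 + Q^2)) • ![0, P, Q, 0] + (P / (a * (P^2 + Q^2))) • ![0, -(a*Q), a*P, 0] := by
        funext i; fin_cases i <;> simp [smul_eq_mul] <;> field_simp <;> ring
      rw [heq]
      exact S.add_mem (S.smul_mem _ hW) (S.smul_mem _ hW1)
    have hU1 : (![a1, 0, 0, d1] : Fin 4 → ℝ) ∈ S := by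
      have heq : (![a1, 0, 0, d1] : Fin 4 → ℝ) =
          V1 + (-b1) • ![0, 1, 0, 0] + (-c1) • ![0, 0, 1, 0] := by
        funext i; fin_cases i <;> simp [V1, smul_eq_mul]
      rw [heq]
      exact S.add_mem (S.add_mem hV1 (S.smul_mem _ he1)) (S.smul_mem _ he2)
    have hU2 : (![a2, 0, 0, d2] : Fin 4 → ℝ) ∈ S := by
      have heq : (![a2, 0, 0, d2] : Fin 4 → ℝ) =
          V2 + (-b2) • ![0, 1, 0, 0] + (-c2) • ![0, 0, 1, 0] := by
        funext i; fin_cases i <;> simp [V2, smul_eq_mul]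
      rw [heq]
      exact S.add_mem (S.add_mem hV2 (S.smul_mem _ he1)) (S.smul_mem _ he2)
    have he0 : (![1, 0, 0, 0] : Fin 4 → ℝ) ∈ S := by
      have heq : (![1, 0, 0, 0] : Fin 4 → ℝ) =
          (-d2 / (a2 * d1 - d2 * a1)) • ![a1, 0, 0, d1]
            + (d1 / (a2 * d1 - d2 * a1)) • ![a2, 0, 0, d2] := by
        funext i; fin_cases i <;> simp [smul_eq_mul] <;> field_simp <;> ring
      rw [heq]
      exact S.add_mem (S.smul_mem _ hU1) (S.smul_mem _ hU2)
    have he3 : (![0, 0, 0, 1] : Fin 4 → ℝ) ∈ S := by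
      have heq : (![0, 0, 0, 1] : Fin 4 → ℝ) =
          (a2 / (a2 * d1 - d2 * a1)) • ![a1, 0, 0, d1]
            + (-a1 / (a2 * d1 - d2 * a1)) • ![a2, 0, 0, d2] := by
        funext i; fin_cases i <;> simp [smul_eq_mul] <;> field_simp <;> ring
      rw [heq]
      exact S.add_mem (S.smul_mem _ hU1) (S.smul_mem _ hU2)
    rw [Submodule.eq_top_iff']
    intro v
    have hv : v = v 0 • ![1, 0, 0, 0] + v 1 • ![0, 1, 0, 0]
        + v 2 • ![0, 0, 1, 0] + v 3 • ![0, 0, 0, 1] := by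
      funext i; fin_cases i <;> simp [smul_eq_mul]
    rw [hv]
    exact S.add_mem (S.add_mem (S.add_mem (S.smul_mem _ he0) (S.smul_mem _ he1))
      (S.smul_mem _ he2)) (S.smul_mem _ he3)
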